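/- Let X be a weighted sequence of length n over a finite alphabet Σ, let z ≥ 1 be real, and fix a position i ∈ {1,…,n}. There exists a unique multiset M of strings over Σ such that every string P is a prefix of exactly ⌊z·P_X(P,i)⌋ elements of M (counted with multiplicity); namely, M is the multiset in which each string P has multiplicity m_i(P) = t_i(P) − Σ_{c∈Σ} t_i(Pc). -/

import Mathlib

open scoped Classical
open Finset

variable {α : Type*}

/-- Matching probability `P_X(P,i)` of pattern `P` at (1-based) position `i`
in a weighted sequence of length `n` with letter probabilities `p`. -/
def matchProb (n : ℕ) (p : ℕ → α → ℝ) : List α → ℕ → ℝ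
  | [], _ => 1
  | c :: P, i => if i ≤ n then p i c * matchProb n p P (i + 1) else 0

/-- `p` describes a weighted sequence of length `n`: at each position `i ∈ {1,…,n}`
the letter probabilities are nonnegative and sum to 1. -/
def IsWeighted [Fintype α] (n : ℕ) (p : ℕ → α → ℝ) : Prop :=
  ∀ i, 1 ≤ i → i ≤ n → (∀ c, 0 ≤ p i c) ∧ ∑ c, p i c = 1

/-- A property array for strings of length `n`:
`π i ∈ {i-1,…,n}` for `i ∈ {1,…,n}` and `π` is nondecreasing on `{1,…,n}`. -/
def IsPropertyArray (n : ℕ) (π : ℕ → ℕ) : Prop :=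
  (∀ i, 1 ≤ i → i ≤ n → i - 1 ≤ π i ∧ π i ≤ n) ∧
    ∀ i, 1 ≤ i → i + 1 ≤ n → π i ≤ π (i + 1)

/-- The factor `S[i..j]` (1-based, empty when `j < i`). -/
def factor (S : List α) (i j : ℕ) : List α := (S.drop (i - 1)).take (j + 1 - i)

/-- `i ∈ Occ_π(P,S)`: `P = S[i..i+|P|-1]` and `i+|P|-1 ≤ π i`. -/
def occursAt (S : List α) (π : ℕ → ℕ) (P : List α) (i : ℕ) : Prop :=
  factor S i (i + P.length - 1) = P ∧ i + P.length - 1 ≤ π i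

/-- `Count_𝒮(P,i)`: number of members of the family in which `P` occurs at `i`
respecting the property. -/
noncomputable def countOcc {k : ℕ} (S : Fin k → List α) (π : Fin k → ℕ → ℕ)
    (P : List α) (i : ℕ) : ℕ :=
  (Finset.univ.filter fun j => occursAt (S j) (π j) P i).card

/-- `P` is compatible with `Q` if `P = ε` or `P = cQ'` for a letter `c` and a prefix `Q'` of `Q`. -/
def Compatible (P Q : List α) : Prop :=
  P = [] ∨ ∃ (c : α) (Q' : List α), Q' <+: Q ∧ P = c :: Q'

/-- A random string `S : Fin n → α` matches pattern `P` at (1-based) position `i`. -/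
def Matches {n : ℕ} (S : Fin n → α) (P : List α) (i : ℕ) : Prop :=
  ((List.ofFn S).drop (i - 1)).take P.length = P

/-- The probability of the outcome `S` under the product distribution determined by `p`. -/
def strWeight (n : ℕ) (p : ℕ → α → ℝ) (S : Fin n → α) : ℝ :=
  ∏ j : Fin n, p ((j : ℕ) + 1) (S j)


/-! ### Auxiliary lemmas for the proof -/

section Aux
variable [Fintype α]

private lemma matchProb_nonneg (n : ℕ) (p : ℕ → α → ℝ) (hp : IsWeighted n p) :
    ∀ (P : List α) (j : ℕ), 1 ≤ j → 0 ≤ matchProb n p P j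
  | [], j, _ => by simp [matchProb]
  | c :: P, j, hj => by
      by_cases h : j ≤ n
      · simp only [matchProb, if_pos h]
        exact mul_nonneg ((hp j hj h).1 c)
          (matchProb_nonneg n p hp P (j + 1) (by omega))
      · simp [matchProb, h]

private lemma matchProb_zero (n : ℕ) (p : ℕ → α → ℝ) :
    ∀ (P : List α), P ≠ [] → ∀ j : ℕ, n + 1 < j + P.length → matchProb n p P j = 0
  | [], h, _, _ => absurd rfl h
  | c :: P, _, j, hlen => by
      by_cases h : j ≤ n
      · have hne : P ≠ [] := by
          rintro rfl; simp at hlen; omega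
        simp only [matchProb, if_pos h]
        rw [matchProb_zero n p P hne (j + 1) (by simp at hlen; omega), mul_zero]
      · simp [matchProb, h]

private lemma matchProb_sum_le (n : ℕ) (p : ℕ → α → ℝ) (hp : IsWeighted n p) :
    ∀ (P : List α) (j : ℕ), 1 ≤ j →
      ∑ c : α, matchProb n p (P ++ [c]) j ≤ matchProb n p P j
  | [], j, hj => by
      by_cases h : j ≤ n
      · simp [matchProb, h, (hp j hj h).2]
      · simp [matchProb, h]
  | a :: P, j, hj => by
      by_cases h : j ≤ n
      · simp only [List.cons_append, matchProb, if_pos h, ← Finset.mul_sum]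
        exact mul_le_mul_of_nonneg_left
          (matchProb_sum_le n p hp P (j + 1) (by omega)) ((hp j hj h).1 a)
      · simp [matchProb, h]

end Aux

namespace WSAux

variable [Fintype α]

/-- `t_i(P)` as a natural number. -/
noncomputable def tN (n : ℕ) (p : ℕ → α → ℝ) (z : ℝ) (i : ℕ) (P : List α) : ℕ :=
  ⌊z * matchProb n p P i⌋₊

/-- the multiplicity `m_i(P)`. -/
noncomputable def mlt (n : ℕ) (p : ℕ → α → ℝ) (z : ℝ) (i : ℕ) (P : List α) : ℕ :=
  tN n p z i P - ∑ c : α, tN n p z i (P ++ [c])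

/-- The candidate multiset, built recursively to depth `d` starting from `P`. -/
noncomputable def build (n : ℕ) (p : ℕ → α → ℝ) (z : ℝ) (i : ℕ) :
    ℕ → List α → Multiset (List α)
  | 0, P => Multiset.replicate (mlt n p z i P) P
  | d + 1, P =>
      Multiset.replicate (mlt n p z i P) P + ∑ c : α, build n p z i d (P ++ [c])

variable {n : ℕ} {p : ℕ → α → ℝ} {z : ℝ} {i : ℕ}

private lemma sum_tN_le (hp : IsWeighted n p) (hz : 1 ≤ z) (hi1 : 1 ≤ i) (P : List α) :
    ∑ c : α, tN n p z i (P ++ [c]) ≤ tN n p z i P := by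
  apply Nat.le_floor
  push_cast
  calc ∑ c : α, ((⌊z * matchProb n p (P ++ [c]) i⌋₊ : ℝ))
      ≤ ∑ c : α, z * matchProb n p (P ++ [c]) i := by
        refine Finset.sum_le_sum fun c _ => Nat.floor_le ?_
        exact mul_nonneg (by linarith) (matchProb_nonneg n p hp _ i hi1)
    _ = z * ∑ c : α, matchProb n p (P ++ [c]) i := by rw [Finset.mul_sum]
    _ ≤ z * matchProb n p P i :=
        mul_le_mul_of_nonneg_left (matchProb_sum_le n p hp P i hi1) (by linarith)

private lemma tN_rec (hp : IsWeighted n p) (hz : 1 ≤ z) (hi1 : 1 ≤ i) (P : List α) :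
    tN n p z i P = mlt n p z i P + ∑ c : α, tN n p z i (P ++ [c]) := by
  rw [mlt, Nat.sub_add_cancel (sum_tN_le hp hz hi1 P)]

private lemma tN_vanish (hin : i ≤ n) (P : List α) (h : n + 1 - i < P.length) :
    tN n p z i P = 0 := by
  have hne : P ≠ [] := by rintro rfl; simp at h
  rw [tN, matchProb_zero n p P hne i (by omega), mul_zero]
  simp

private lemma countP_replicate (q : List α → Prop) [DecidablePred q] (k : ℕ) (a : List α) :
    Multiset.countP q (Multiset.replicate k a) = if q a then k else 0 := by
  induction k with
  | zero => simp
  | succ k ih =>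
      rw [Multiset.replicate_succ, Multiset.countP_cons, ih]
      by_cases h : q a <;> simp [h]

private lemma card_multiset_sum {β : Type*} (s : Finset β) (f : β → Multiset (List α)) :
    Multiset.card (∑ c ∈ s, f c) = ∑ c ∈ s, Multiset.card (f c) := by
  induction s using Finset.cons_induction with
  | empty => simp
  | cons a s ha ih => simp [Finset.sum_cons, ih]

private lemma mem_build (d : ℕ) : ∀ (Q R : List α), R ∈ build n p z i d Q →
    Q <+: R ∧ R.length ≤ Q.length + d := by
  induction d with
  | zero =>
      intro Q R hR
      rw [build] at hR
      rw [Multiset.eq_of_mem_replicate hR]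
      exact ⟨List.prefix_refl _, by omega⟩
  | succ d ih =>
      intro Q R hR
      rw [build, Multiset.mem_add] at hR
      rcases hR with hR | hR
      · rw [Multiset.eq_of_mem_replicate hR]
        exact ⟨List.prefix_refl _, by omega⟩
      · rw [Multiset.mem_sum] at hR
        obtain ⟨c, -, hR⟩ := hR
        obtain ⟨h1, h2⟩ := ih (Q ++ [c]) R hR
        refine ⟨(List.prefix_append _ _).trans h1, ?_⟩
        simp at h2; omega

private lemma card_build (hp : IsWeighted n p) (hz : 1 ≤ z) (hi1 : 1 ≤ i) (hin : i ≤ n)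
    (d : ℕ) : ∀ Q : List α, n + 1 - i ≤ Q.length + d →
      Multiset.card (build n p z i d Q) = tN n p z i Q := by
  induction d with
  | zero =>
      intro Q hd
      rw [build, Multiset.card_replicate, tN_rec hp hz hi1 Q,
        Finset.sum_eq_zero fun c _ => tN_vanish hin (Q ++ [c]) (by simp; omega)]
      simp
  | succ d ih =>
      intro Q hd
      rw [build, Multiset.card_add, Multiset.card_replicate]
      rw [card_multiset_sum]
      rw [Finset.sum_congr rfl fun c _ => ih (Q ++ [c]) (by simp; omega)]
      exact (tN_rec hp hz hi1 Q).symm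

private lemma countP_build (hp : IsWeighted n p) (hz : 1 ≤ z) (hi1 : 1 ≤ i) (hin : i ≤ n)
    (d : ℕ) : ∀ Q P : List α, n + 1 - i ≤ Q.length + d → Q <+: P →
      P.length ≤ Q.length + d →
      Multiset.countP (fun R => P <+: R) (build n p z i d Q) = tN n p z i P := by
  induction d with
  | zero =>
      intro Q P hd hQP hlen
      have hPQ : Q = P := hQP.eq_of_length_le (by omega)
      subst hPQ
      rw [build, countP_replicate, if_pos (List.prefix_refl _),
        tN_rec hp hz hi1 Q,
        Finset.sum_eq_zero fun c _ => tN_vanish hin (Q ++ [c]) (by simp; omega)]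
      simp
  | succ d ih =>
      intro Q P hd hQP hlen
      rw [build, Multiset.countP_add, countP_replicate]
      rw [show Multiset.countP (fun R => P <+: R) (∑ c : α, build n p z i d (Q ++ [c]))
          = ∑ c : α, Multiset.countP (fun R => P <+: R) (build n p z i d (Q ++ [c])) from
        map_sum (Multiset.countPAddMonoidHom _) _ _]
      rcases eq_or_ne P Q with rfl | hne
      · rw [if_pos (List.prefix_refl _)]
        have hall : ∀ c : α, c ∈ (Finset.univ : Finset α) →
            Multiset.countP (fun R => P <+: R) (build n p z i d (P ++ [c])) =
              tN n p z i (P ++ [c]) := by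
          intro c _
          rw [Multiset.countP_eq_card.mpr fun R hR =>
              (List.prefix_append _ _).trans (mem_build d (P ++ [c]) R hR).1]
          exact card_build hp hz hi1 hin d (P ++ [c]) (by simp; omega)
        rw [Finset.sum_congr rfl hall]
        exact (tN_rec hp hz hi1 P).symm
      · obtain ⟨T, rfl⟩ := hQP
        have hTne : T ≠ [] := by rintro rfl; simp at hne
        obtain ⟨c₀, R₀, rfl⟩ := List.exists_cons_of_ne_nil hTne
        have hnotpre : ¬ (Q ++ c₀ :: R₀) <+: Q := by
          intro h; have := h.length_le; simp at this
        rw [if_neg hnotpre, zero_add]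
        have key : ∀ c : α, c ∈ (Finset.univ : Finset α) →
            Multiset.countP (fun R => (Q ++ c₀ :: R₀) <+: R) (build n p z i d (Q ++ [c])) =
              if c = c₀ then tN n p z i (Q ++ c₀ :: R₀) else 0 := by
          intro c _
          rcases eq_or_ne c c₀ with rfl | hc
          · rw [if_pos rfl]
            exact ih (Q ++ [c]) _ (by simp; omega)
              ⟨R₀, by simp⟩ (by simp at hlen ⊢; omega)
          · rw [if_neg hc, Multiset.countP_eq_zero.mpr]
            intro R hR hPR
            have hQc := (mem_build d (Q ++ [c]) R hR).1
            rcases List.prefix_or_prefix_of_prefix hQc hPR with h | h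
            · rw [List.prefix_append_right_inj] at h
              obtain ⟨T', hT'⟩ := h
              simp at hT'
              exact hc hT'.1
            · have hPeq : Q ++ c₀ :: R₀ = Q ++ [c] :=
                h.eq_of_length_le (by simp)
              have := List.append_cancel_left hPeq
              simp at this
              exact hc this.1.symm
        rw [Finset.sum_congr rfl key, Finset.sum_ite_eq' Finset.univ c₀
          (fun _ => tN n p z i (Q ++ c₀ :: R₀)), if_pos (Finset.mem_univ _)]

/-- Pointwise indicator identity: `P` is a prefix of `Q` iff either `P = Q`
or exactly one one-letter extension of `P` is a prefix of `Q`. -/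
private lemma indicator (P Q : List α) :
    (if P <+: Q then (1 : ℕ) else 0) =
      (if P = Q then 1 else 0) + ∑ c : α, (if P ++ [c] <+: Q then 1 else 0) := by
  by_cases h : P <+: Q
  · rcases eq_or_ne P Q with rfl | hne
    · rw [if_pos (List.prefix_refl _), if_pos rfl, Finset.sum_eq_zero, add_zero]
      intro c _
      rw [if_neg]
      intro hc; have := hc.length_le; simp at this
    · obtain ⟨T, rfl⟩ := h
      have hTne : T ≠ [] := by rintro rfl; simp at hne
      obtain ⟨c₀, R₀, rfl⟩ := List.exists_cons_of_ne_nil hTne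
      rw [if_pos (List.prefix_append _ _), if_neg hne, zero_add,
        Finset.sum_eq_single c₀]
      · rw [if_pos ⟨R₀, by simp⟩]
      · intro c _ hc
        rw [if_neg]
        intro hpre
        rw [List.prefix_append_right_inj] at hpre
        obtain ⟨T', hT'⟩ := hpre
        simp at hT'
        exact hc hT'.1
      · intro hmem; exact absurd (Finset.mem_univ c₀) hmem
  · rw [if_neg h, if_neg (by rintro rfl; exact h (List.prefix_refl _)),
      Finset.sum_eq_zero, add_zero]
    intro c _
    rw [if_neg]
    exact fun hc => h ((List.prefix_append _ _).trans hc)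

/-- Splitting the prefix count of a multiset. -/
private lemma countP_split (M : Multiset (List α)) (P : List α) :
    Multiset.countP (fun Q => P <+: Q) M =
      M.count P + ∑ c : α, Multiset.countP (fun Q => P ++ [c] <+: Q) M := by
  induction M using Multiset.induction_on with
  | empty => simp
  | cons a M ih =>
      rw [Multiset.countP_cons, ih, Multiset.count_cons,
        Finset.sum_congr rfl (fun c _ => Multiset.countP_cons _ a M),
        Finset.sum_add_distrib, indicator P a]
      ring

end WSAux

/-- there is a unique multiset `M` such that every string `P` is a prefix of
exactly `⌊z·P_X(P,i)⌋` elements of `M`; namely the multiset in which each `P` has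
multiplicity `m_i(P) = t_i(P) - Σ_c t_i(Pc)`. -/



theorem exists_unique_multiset_prefix_counts [Fintype α]
    (n : ℕ) (p : ℕ → α → ℝ) (hp : IsWeighted n p) (z : ℝ) (hz : 1 ≤ z)
    (i : ℕ) (hi1 : 1 ≤ i) (hin : i ≤ n) :
    (∃! M : Multiset (List α),
      ∀ P : List α,
        (M.filter fun Q => P <+: Q).card = ⌊z * matchProb n p P i⌋₊) ∧
    ∀ M : Multiset (List α),
      (∀ P : List α,
        (M.filter fun Q => P <+: Q).card = ⌊z * matchProb n p P i⌋₊) →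
      ∀ P : List α,
        (M.count P : ℤ) =
          ⌊z * matchProb n p P i⌋ - ∑ c : α, ⌊z * matchProb n p (P ++ [c]) i⌋ := by
  classical
  -- the ℕ-valued recursion satisfied by any `M` with the prefix-count property
  have hNat : ∀ M : Multiset (List α),
      (∀ P : List α,
        (M.filter fun Q => P <+: Q).card = ⌊z * matchProb n p P i⌋₊) →
      ∀ P : List α,
        WSAux.tN n p z i P = M.count P + ∑ c : α, WSAux.tN n p z i (P ++ [c]) := by
    intro M hM P
    have h1 := WSAux.countP_split M P
    rw [Multiset.countP_eq_card_filter] at h1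
    rw [Finset.sum_congr rfl (fun c _ => Multiset.countP_eq_card_filter _ _)] at h1
    rw [hM P, Finset.sum_congr rfl (fun c _ => hM (P ++ [c]))] at h1
    exact h1
  -- the candidate multiset
  set D : ℕ := n + 1 - i with hD
  set M₀ : Multiset (List α) := WSAux.build n p z i D [] with hM₀
  have hM₀prop : ∀ P : List α,
      (M₀.filter fun Q => P <+: Q).card = ⌊z * matchProb n p P i⌋₊ := by
    intro P
    rw [← Multiset.countP_eq_card_filter]
    by_cases hlen : P.length ≤ D
    · exact WSAux.countP_build hp hz hi1 hin D [] P (by simp; omega) P.nil_prefix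
        (by simpa using hlen)
    · rw [Multiset.countP_eq_zero.mpr, Eq.comm]
      · exact WSAux.tN_vanish hin P (by omega)
      · intro R hR hPR
        have h2 := (WSAux.mem_build D [] R hR).2
        have h3 := hPR.length_le
        simp at h2
        omega
  constructor
  · refine ⟨M₀, hM₀prop, ?_⟩
    intro M hM
    ext P
    have e1 := hNat M hM P
    have e2 := hNat M₀ hM₀prop P
    omega
  · intro M hM P
    have e1 := hNat M hM P
    have hnn : ∀ Q : List α, (0:ℝ) ≤ z * matchProb n p Q i := fun Q =>
      mul_nonneg (by linarith) (matchProb_nonneg n p hp Q i hi1)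
    have cast1 : ∀ Q : List α, ((⌊z * matchProb n p Q i⌋₊ : ℤ)) = ⌊z * matchProb n p Q i⌋ :=
      fun Q => Int.natCast_floor_eq_floor (hnn Q)
    have e2 : (WSAux.tN n p z i P : ℤ)
        = (M.count P : ℤ) + ∑ c : α, (WSAux.tN n p z i (P ++ [c]) : ℤ) := by
      exact_mod_cast congrArg (fun k : ℕ => (k : ℤ)) e1
    rw [← cast1 P, ← Finset.sum_congr rfl (fun c _ => cast1 (P ++ [c]))]
    show (M.count P : ℤ)
        = (WSAux.tN n p z i P : ℤ) - ∑ c : α, (WSAux.tN n p z i (P ++ [c]) : ℤ)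
    omega
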